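/- Cheeger inequality for L¹-valued maps: if G = (V,E') is a finite graph with edge expansion α(G) (every S ⊆ V with |S| ≤ |V|/2 has at least α|S|·|E'|/|V| edges to its complement), then for every f : V → L¹, (1/|E'|)·Σ_{xy ∈ E'} ‖f(x)-f(y)‖₁ ≥ (α/(2|V|²))·Σ_{x,y ∈ V} ‖f(x)-f(y)‖₁. -/

import Mathlib

open MeasureTheory Finset

/-- The threshold-cut indicator: 1 if `t` separates `a` and `b`. -/
private noncomputable def cutInd (a b t : ℝ) : ℝ := if min a b ≤ t ∧ t < max a b then 1 else 0

private lemma cutInd_eq_indicator (a b : ℝ) :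
    (fun t => cutInd a b t) = Set.indicator (Set.Ico (min a b) (max a b)) (fun _ => (1:ℝ)) := by
  funext t
  simp [cutInd, Set.indicator, Set.mem_Ico]

private lemma integrable_cutInd (a b : ℝ) : Integrable (fun t => cutInd a b t) := by
  rw [cutInd_eq_indicator]
  exact (integrable_indicator_iff measurableSet_Ico).2
    (integrableOn_const measure_Ico_lt_top.ne)

private lemma integral_cutInd (a b : ℝ) : ∫ t, cutInd a b t = |a - b| := by
  rw [cutInd_eq_indicator, integral_indicator measurableSet_Ico]
  rw [setIntegral_const, measureReal_def, Real.volume_Ico, smul_eq_mul, mul_one]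
  rw [ENNReal.toReal_ofReal_eq_iff.2]
  · rcases le_total a b with h | h <;> simp [max_eq_right, max_eq_left, min_eq_left,
      min_eq_right, h, abs_sub_comm, abs_of_nonneg, abs_of_nonpos, sub_nonneg, sub_nonpos]
  · simp [sub_nonneg]

private lemma sum_ind_prod {V : Type*} [Fintype V] (P Q : V → Prop)
    [DecidablePred P] [DecidablePred Q] :
    ∑ x : V, ∑ y : V, (if P x ∧ Q y then (1:ℝ) else 0)
      = ((univ.filter P).card : ℝ) * ((univ.filter Q).card : ℝ) := by
  have : ∀ x y : V, (if P x ∧ Q y then (1:ℝ) else 0)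
      = (if P x then (1:ℝ) else 0) * (if Q y then (1:ℝ) else 0) := by
    intro x y
    by_cases hx : P x <;> by_cases hy : Q y <;> simp [hx, hy]
  simp_rw [this]
  rw [← Fintype.sum_mul_sum, Finset.sum_boole, Finset.sum_boole]

/-- Pointwise (in the threshold `t`) form of the Cheeger inequality. -/
private lemma key_pointwise {V : Type*} [Fintype V] [DecidableEq V]
    (E' : Finset (V × V)) (hE : E'.Nonempty)
    (hsym : ∀ x y : V, (x, y) ∈ E' ↔ (y, x) ∈ E')
    (α : ℝ) (hα : 0 ≤ α)
    (hexp : ∀ S : Finset V, 2 * S.card ≤ Fintype.card V →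
      α * S.card * E'.card / (Fintype.card V : ℝ) ≤
        ((E'.filter (fun e => e.1 ∈ S ∧ e.2 ∉ S)).card : ℝ))
    (g : V → ℝ) (t : ℝ) :
    (α / (2 * (Fintype.card V : ℝ) ^ 2)) *
        ∑ x : V, ∑ y : V, cutInd (g x) (g y) t ≤
      (1 / (E'.card : ℝ)) * ∑ e ∈ E', cutInd (g e.1) (g e.2) t := by
  classical
  obtain ⟨e₀, he₀⟩ := hE
  have hVne : Nonempty V := ⟨e₀.1⟩
  set A : Finset V := univ.filter (fun v => g v ≤ t) with hA
  set B : Finset V := univ.filter (fun v => ¬ g v ≤ t) with hB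
  -- decompose the indicator
  have hind : ∀ x y : V, cutInd (g x) (g y) t
      = (if (x ∈ A ∧ y ∉ A) then (1:ℝ) else 0) + (if (x ∉ A ∧ y ∈ A) then (1:ℝ) else 0) := by
    intro x y
    simp only [hA, mem_filter, mem_univ, true_and, cutInd]
    by_cases hx : g x ≤ t <;> by_cases hy : g y ≤ t <;>
      simp [hx, hy, min_le_iff, lt_max_iff, not_le.1, not_lt.2]
  -- the double sum
  have hdouble : ∑ x : V, ∑ y : V, cutInd (g x) (g y) t
      = (A.card : ℝ) * (B.card : ℝ) + (B.card : ℝ) * (A.card : ℝ) := by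
    simp_rw [hind, Finset.sum_add_distrib]
    rw [sum_ind_prod (fun x => x ∈ A) (fun y => y ∉ A),
        sum_ind_prod (fun x => x ∉ A) (fun y => y ∈ A)]
    have h1 : univ.filter (fun x : V => x ∈ A) = A := by
      ext v; simp [hA]
    have h2 : univ.filter (fun x : V => x ∉ A) = B := by
      ext v; simp [hA, hB]
    rw [h1, h2]
  -- the edge sum
  have hedge : ∑ e ∈ E', cutInd (g e.1) (g e.2) t
      = ((E'.filter (fun e => e.1 ∈ A ∧ e.2 ∉ A)).card : ℝ)
        + ((E'.filter (fun e => e.1 ∉ A ∧ e.2 ∈ A)).card : ℝ) := by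
    have : ∀ e ∈ E', cutInd (g e.1) (g e.2) t
        = (if (e.1 ∈ A ∧ e.2 ∉ A) then (1:ℝ) else 0)
          + (if (e.1 ∉ A ∧ e.2 ∈ A) then (1:ℝ) else 0) := fun e _ => hind e.1 e.2
    rw [Finset.sum_congr rfl this, Finset.sum_add_distrib, Finset.sum_boole, Finset.sum_boole]
  -- the two cross-edge sets have the same cardinality
  have hswap : (E'.filter (fun e => e.1 ∈ A ∧ e.2 ∉ A)).card
      = (E'.filter (fun e => e.1 ∉ A ∧ e.2 ∈ A)).card := by
    apply Finset.card_nbij' (fun e => (e.2, e.1)) (fun e => (e.2, e.1))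
    · intro e he
      simp only [Finset.mem_coe, mem_filter] at he ⊢
      exact ⟨(hsym e.1 e.2).1 he.1, he.2.2, he.2.1⟩
    · intro e he
      simp only [Finset.mem_coe, mem_filter] at he ⊢
      exact ⟨(hsym e.1 e.2).1 he.1, he.2.2, he.2.1⟩
    · intro e _; rfl
    · intro e _; rfl
  -- B-cross edges equal the second filter
  have hBcross : (E'.filter (fun e => e.1 ∈ B ∧ e.2 ∉ B)) =
      (E'.filter (fun e => e.1 ∉ A ∧ e.2 ∈ A)) := by
    apply Finset.filter_congr
    intro e _
    simp [hA, hB]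
  have hcards : A.card + B.card = Fintype.card V := by
    rw [hA, hB]
    rw [Finset.card_filter_add_card_filter_not]
    exact Finset.card_univ
  -- notation
  set n : ℕ := Fintype.card V
  set a : ℕ := A.card
  set b : ℕ := B.card
  set m : ℕ := E'.card
  set c₁ : ℕ := (E'.filter (fun e => e.1 ∈ A ∧ e.2 ∉ A)).card
  have hm : 0 < m := Finset.card_pos.2 ⟨e₀, he₀⟩
  have hn : 0 < n := Fintype.card_pos
  have hmR : (0:ℝ) < m := by exact_mod_cast hm
  have hnR : (0:ℝ) < n := by exact_mod_cast hn
  rw [hdouble, hedge, ← hswap]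
  -- goal is now purely arithmetic given the expansion hypothesis
  have hc₁ : (0:ℝ) ≤ (c₁ : ℝ) := Nat.cast_nonneg _
  have hbR : (0:ℝ) ≤ b := Nat.cast_nonneg _
  have haR : (0:ℝ) ≤ a := Nat.cast_nonneg _
  have hbn : (b:ℝ) ≤ n := by
    have : b ≤ n := by omega
    exact_mod_cast this
  have han : (a:ℝ) ≤ n := by
    have : a ≤ n := by omega
    exact_mod_cast this
  rw [div_mul_eq_mul_div, one_div, inv_mul_eq_div,
    div_le_div_iff₀ (by positivity : (0:ℝ) < 2 * (n:ℝ) ^ 2) hmR]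
  rcases le_or_gt (2 * a) n with hcase | hcase
  · -- A is the small side
    have h : α * (a:ℝ) * m / n ≤ c₁ := hexp A hcase
    rw [div_le_iff₀ hnR] at h
    nlinarith [mul_le_mul_of_nonneg_right h hbR,
      mul_le_mul_of_nonneg_left hbn (mul_nonneg hc₁ hnR.le),
      mul_nonneg (mul_nonneg hc₁ hnR.le) hnR.le]
  · -- B is the small side
    have hcase' : 2 * b ≤ n := by omega
    have h0 := hexp B hcase'
    rw [hBcross, ← hswap] at h0
    have h : α * (b:ℝ) * m / n ≤ c₁ := h0
    rw [div_le_iff₀ hnR] at h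
    nlinarith [mul_le_mul_of_nonneg_right h haR,
      mul_le_mul_of_nonneg_left han (mul_nonneg hc₁ hnR.le),
      mul_nonneg (mul_nonneg hc₁ hnR.le) hnR.le]

/-- Real-valued case of the Cheeger inequality. -/
private lemma real_case {V : Type*} [Fintype V] [DecidableEq V]
    (E' : Finset (V × V)) (hE : E'.Nonempty)
    (hsym : ∀ x y : V, (x, y) ∈ E' ↔ (y, x) ∈ E')
    (α : ℝ) (hα : 0 ≤ α)
    (hexp : ∀ S : Finset V, 2 * S.card ≤ Fintype.card V →
      α * S.card * E'.card / (Fintype.card V : ℝ) ≤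
        ((E'.filter (fun e => e.1 ∈ S ∧ e.2 ∉ S)).card : ℝ))
    (g : V → ℝ) :
    (α / (2 * (Fintype.card V : ℝ) ^ 2)) * ∑ x : V, ∑ y : V, |g x - g y| ≤
      (1 / (E'.card : ℝ)) * ∑ e ∈ E', |g e.1 - g e.2| := by
  classical
  have hFint : Integrable (fun t => ∑ x : V, ∑ y : V, cutInd (g x) (g y) t) :=
    integrable_finset_sum _ (fun x _ => integrable_finset_sum _ (fun y _ => integrable_cutInd _ _))
  have hGint : Integrable (fun t => ∑ e ∈ E', cutInd (g e.1) (g e.2) t) :=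
    integrable_finset_sum _ (fun e _ => integrable_cutInd _ _)
  have hFeq : ∑ x : V, ∑ y : V, |g x - g y|
      = ∫ t, ∑ x : V, ∑ y : V, cutInd (g x) (g y) t := by
    rw [integral_finset_sum _ (fun x _ => integrable_finset_sum _
      (fun y _ => integrable_cutInd _ _))]
    refine Finset.sum_congr rfl fun x _ => ?_
    rw [integral_finset_sum _ (fun y _ => integrable_cutInd _ _)]
    exact Finset.sum_congr rfl fun y _ => (integral_cutInd _ _).symm
  have hGeq : ∑ e ∈ E', |g e.1 - g e.2| = ∫ t, ∑ e ∈ E', cutInd (g e.1) (g e.2) t := by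
    rw [integral_finset_sum _ (fun e _ => integrable_cutInd _ _)]
    exact Finset.sum_congr rfl fun e _ => (integral_cutInd _ _).symm
  rw [hFeq, hGeq, ← integral_const_mul, ← integral_const_mul]
  exact integral_mono (hFint.const_mul _) (hGint.const_mul _)
    (fun t => key_pointwise E' hE hsym α hα hexp g t)

/-- Cheeger inequality for L¹-valued maps on a finite graph with edge
expansion α (edges are given as a symmetric set of ordered pairs). -/
theorem stmt7 {V : Type*} [Fintype V] [DecidableEq V]
    {Ω : Type*} [MeasurableSpace Ω] (μ : Measure Ω)
    (E' : Finset (V × V)) (hE : E'.Nonempty)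
    (hsym : ∀ x y : V, (x, y) ∈ E' ↔ (y, x) ∈ E')
    (α : ℝ) (hα : 0 ≤ α)
    (hexp : ∀ S : Finset V, 2 * S.card ≤ Fintype.card V →
      α * S.card * E'.card / (Fintype.card V : ℝ) ≤
        ((E'.filter (fun e => e.1 ∈ S ∧ e.2 ∉ S)).card : ℝ))
    (f : V → Lp ℝ 1 μ) :
    (α / (2 * (Fintype.card V : ℝ) ^ 2)) * ∑ x : V, ∑ y : V, ‖f x - f y‖ ≤
      (1 / (E'.card : ℝ)) * ∑ e ∈ E', ‖f e.1 - f e.2‖ := by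
  classical
  have hI : ∀ x y : V, Integrable (fun ω => |f x ω - f y ω|) μ := by
    intro x y
    exact ((L1.integrable_coeFn (f x - f y)).congr (Lp.coeFn_sub (f x) (f y))).abs
  have hnorm : ∀ x y : V, ‖f x - f y‖ = ∫ ω, |f x ω - f y ω| ∂μ := by
    intro x y
    rw [L1.norm_eq_integral_norm]
    refine integral_congr_ae ?_
    filter_upwards [Lp.coeFn_sub (f x) (f y)] with ω hω
    rw [hω]
    rfl
  have hFeq : ∑ x : V, ∑ y : V, ‖f x - f y‖
      = ∫ ω, ∑ x : V, ∑ y : V, |f x ω - f y ω| ∂μ := by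
    rw [integral_finset_sum _ (fun x _ => integrable_finset_sum _ (fun y _ => hI x y))]
    refine Finset.sum_congr rfl fun x _ => ?_
    rw [integral_finset_sum _ (fun y _ => hI x y)]
    exact Finset.sum_congr rfl fun y _ => hnorm x y
  have hGeq : ∑ e ∈ E', ‖f e.1 - f e.2‖ = ∫ ω, ∑ e ∈ E', |f e.1 ω - f e.2 ω| ∂μ := by
    rw [integral_finset_sum _ (fun e _ => hI e.1 e.2)]
    exact Finset.sum_congr rfl fun e _ => hnorm e.1 e.2
  have hFint : Integrable (fun ω => ∑ x : V, ∑ y : V, |f x ω - f y ω|) μ :=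
    integrable_finset_sum _ (fun x _ => integrable_finset_sum _ (fun y _ => hI x y))
  have hGint : Integrable (fun ω => ∑ e ∈ E', |f e.1 ω - f e.2 ω|) μ :=
    integrable_finset_sum _ (fun e _ => hI e.1 e.2)
  rw [hFeq, hGeq, ← integral_const_mul, ← integral_const_mul]
  exact integral_mono (hFint.const_mul _) (hGint.const_mul _)
    (fun ω => real_case E' hE hsym α hα hexp (fun v => f v ω))
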